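/- arXiv:1403.8038 — 5 statements merged into one kernel-verified Lean document; each statement's English description precedes it below -/
import Mathlib

section
/- There is an absolute constant K > 0 with the following property. Let I be a compact interval, let h ∈ C²(I), set δ₁ = min_{x∈I} |h'(x)| and δ₂ = min_{x∈I} |h''(x)|, and for η > 0 let E(η) := {x ∈ I : |h(x)| < η}. If δ₁ > 0 then the Lebesgue measure of E(η) satisfies |E(η)| ≤ K·η/δ₁, and if δ₂ > 0 then |E(η)| ≤ K·√(η/δ₂). -/
open MeasureTheory Set

/-- A set of reals whose pairwise distances are at most `d` has measure at most `d`. -/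
lemma diamVol {S : Set ℝ} {d : ℝ} (hd : 0 ≤ d)
    (H : ∀ x ∈ S, ∀ y ∈ S, x ≤ y → y - x ≤ d) :
    volume S ≤ ENNReal.ofReal d := by
  rcases S.eq_empty_or_nonempty with rfl | ⟨x0, hx0⟩
  · simp
  have hub : ∀ y ∈ S, y ≤ x0 + d := by
    intro y hy
    rcases le_total y x0 with hyx | hyx
    · linarith
    · linarith [H x0 hx0 y hy hyx]
  have hlb : ∀ y ∈ S, x0 - d ≤ y := by
    intro y hy
    rcases le_total y x0 with hyx | hyx
    · linarith [H y hy x0 hx0 hyx]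
    · linarith
  have hbddA : BddAbove S := ⟨x0 + d, hub⟩
  have hbddB : BddBelow S := ⟨x0 - d, hlb⟩
  have hne : S.Nonempty := ⟨x0, hx0⟩
  have hsub : S ⊆ Icc (sInf S) (sSup S) := fun y hy =>
    ⟨csInf_le hbddB hy, le_csSup hbddA hy⟩
  calc volume S ≤ volume (Icc (sInf S) (sSup S)) := measure_mono hsub
    _ = ENNReal.ofReal (sSup S - sInf S) := Real.volume_Icc
    _ ≤ ENNReal.ofReal d := by
        apply ENNReal.ofReal_le_ofReal
        have h1 : sSup S ≤ sInf S + d := by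
          apply csSup_le hne
          intro y hy
          have h2 : y - d ≤ sInf S := by
            apply le_csInf hne
            intro z hz
            rcases le_total y z with hyz | hyz
            · linarith
            · linarith [H z hz y hy hyz]
          linarith
        linarith

/-- A continuous function on an interval with `δ ≤ |f|`, `δ > 0`, has constant sign. -/
lemma signConst {a b : ℝ} {f : ℝ → ℝ} (hf : ContinuousOn f (Icc a b)) {δ : ℝ}
    (hδ : 0 < δ) (habs : ∀ x ∈ Icc a b, δ ≤ |f x|) :
    (∀ x ∈ Icc a b, δ ≤ f x) ∨ (∀ x ∈ Icc a b, f x ≤ -δ) := by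
  by_contra hcon
  push_neg at hcon
  obtain ⟨⟨x, hx, hx'⟩, ⟨y, hy, hy'⟩⟩ := hcon
  have hfx : f x ≤ -δ := by
    have := habs x hx
    rcases abs_cases (f x) with ⟨he, _⟩ | ⟨he, _⟩
    · linarith [he ▸ this]
    · linarith [he ▸ this]
  have hfy : δ ≤ f y := by
    have := habs y hy
    rcases abs_cases (f y) with ⟨he, _⟩ | ⟨he, _⟩
    · linarith [he ▸ this]
    · linarith [he ▸ this]
  have h0 : (0 : ℝ) ∈ Icc (f x) (f y) := ⟨by linarith, by linarith⟩
  obtain ⟨z, hz, hz0⟩ := isPreconnected_Icc.intermediate_value hx hy hf h0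
  have := habs z hz
  rw [hz0] at this
  simp at this
  linarith

/-- Quantitative growth from a lower bound on the derivative on the open interval. -/
lemma slopeGe {a b : ℝ} {h : ℝ → ℝ} (hcont : ContinuousOn h (Icc a b))
    (hdiff : DifferentiableOn ℝ h (Icc a b)) {C : ℝ}
    (hC : ∀ z ∈ Ioo a b, C ≤ deriv h z) :
    ∀ x ∈ Icc a b, ∀ y ∈ Icc a b, x ≤ y → C * (y - x) ≤ h y - h x := by
  apply (convex_Icc a b).mul_sub_le_image_sub_of_le_deriv hcont
    (hdiff.mono interior_subset)
  intro z hz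
  rw [interior_Icc] at hz
  exact hC z hz

lemma slopeLe {a b : ℝ} {h : ℝ → ℝ} (hcont : ContinuousOn h (Icc a b))
    (hdiff : DifferentiableOn ℝ h (Icc a b)) {C : ℝ}
    (hC : ∀ z ∈ Ioo a b, deriv h z ≤ C) :
    ∀ x ∈ Icc a b, ∀ y ∈ Icc a b, x ≤ y → h y - h x ≤ C * (y - x) := by
  intro x hx y hy hxy
  apply (convex_Icc a b).image_sub_le_mul_sub_of_deriv_le hcont
    (hdiff.mono interior_subset) ?_ x hx y hy hxy
  intro z hz
  rw [interior_Icc] at hz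
  exact hC z hz

lemma derivEq {a b : ℝ} {h : ℝ → ℝ} :
    ∀ z ∈ Ioo a b, deriv h z = derivWithin h (Icc a b) z := fun z hz =>
  (derivWithin_of_mem_nhds (Icc_mem_nhds hz.1 hz.2)).symm

/-- First sublevel-set bound. -/
lemma bound1 {a b : ℝ} {h : ℝ → ℝ} (hcont : ContinuousOn h (Icc a b))
    (hdiff : DifferentiableOn ℝ h (Icc a b))
    (hdcont : ContinuousOn (derivWithin h (Icc a b)) (Icc a b))
    {δ η : ℝ} (hδ : 0 < δ) (hη : 0 < η)
    (habs : ∀ x ∈ Icc a b, δ ≤ |derivWithin h (Icc a b) x|) :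
    volume {x ∈ Icc a b | |h x| < η} ≤ ENNReal.ofReal (2 * η / δ) := by
  have key : ∀ x ∈ Icc a b, ∀ y ∈ Icc a b, x ≤ y → δ * (y - x) ≤ |h y - h x| := by
    rcases signConst hdcont hδ habs with hpos | hneg
    · intro x hx y hy hxy
      have := slopeGe hcont hdiff
        (fun z hz => (derivEq z hz) ▸ hpos z (Ioo_subset_Icc_self hz)) x hx y hy hxy
      exact this.trans (le_abs_self _)
    · intro x hx y hy hxy
      have := slopeLe hcont hdiff (C := -δ)
        (fun z hz => (derivEq z hz) ▸ hneg z (Ioo_subset_Icc_self hz)) x hx y hy hxy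
      calc δ * (y - x) ≤ -(h y - h x) := by linarith
        _ ≤ |h y - h x| := neg_le_abs _
  apply diamVol (by positivity)
  intro x hx y hy hxy
  obtain ⟨hxI, hxh⟩ := hx
  obtain ⟨hyI, hyh⟩ := hy
  have h1 := key x hxI y hyI hxy
  have h2 : |h y - h x| ≤ |h y| + |h x| := abs_sub _ _
  rw [le_div_iff₀ hδ]
  nlinarith

/-- Second sublevel-set bound, in the case the second derivative is bounded below by `δ`. -/
lemma bound2pos {a b : ℝ} (hab : a < b) {h : ℝ → ℝ} (hh : ContDiffOn ℝ 2 h (Icc a b))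
    {δ η : ℝ} (hδ : 0 < δ) (hη : 0 < η)
    (hd2 : ∀ x ∈ Icc a b, δ ≤ derivWithin (derivWithin h (Icc a b)) (Icc a b) x) :
    volume {x ∈ Icc a b | |h x| < η} ≤
      ENNReal.ofReal (2 * (η / Real.sqrt (η * δ)) + (2 * (η / Real.sqrt (η * δ))
        + 2 * (Real.sqrt (η * δ) / δ))) := by
  set I := Icc a b with hI
  set g := derivWithin h I with hg
  have hUD : UniqueDiffOn ℝ I := uniqueDiffOn_Icc hab
  have hgcont : ContinuousOn g I := hh.continuousOn_derivWithin hUD (by norm_num)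
  have hgdiff : DifferentiableOn ℝ g I :=
    (hh.derivWithin (m := 1) hUD (by norm_num)).differentiableOn (by norm_num)
  have hhdiff : DifferentiableOn ℝ h I := hh.differentiableOn (by norm_num)
  have hhcont : ContinuousOn h I := hh.continuousOn
  set l := Real.sqrt (η * δ) with hl
  have hlpos : 0 < l := Real.sqrt_pos.mpr (by positivity)
  -- g grows with slope at least δ
  have hgslope : ∀ x ∈ I, ∀ y ∈ I, x ≤ y → δ * (y - x) ≤ g y - g x :=
    slopeGe hgcont hgdiff (fun z hz => (derivEq z hz) ▸ hd2 z (Ioo_subset_Icc_self hz))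
  have hgmono : ∀ x ∈ I, ∀ y ∈ I, x ≤ y → g x ≤ g y := by
    intro x hx y hy hxy
    nlinarith [hgslope x hx y hy hxy]
  set E := {x ∈ I | |h x| < η} with hE
  set A := {x ∈ I | l ≤ g x} with hA
  set B := {x ∈ I | g x ≤ -l} with hB
  set M := {x ∈ I | |g x| < l} with hM
  have hsplit : E ⊆ (E ∩ A) ∪ ((E ∩ B) ∪ M) := by
    intro x hx
    by_cases hgx : |g x| < l
    · exact Or.inr (Or.inr ⟨hx.1, hgx⟩)
    · push_neg at hgx
      rcases abs_cases (g x) with ⟨he, _⟩ | ⟨he, _⟩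
      · exact Or.inl ⟨hx, hx.1, by linarith [he ▸ hgx]⟩
      · exact Or.inr (Or.inl ⟨hx, hx.1, by linarith [he ▸ hgx]⟩)
  -- bound on M
  have hMvol : volume M ≤ ENNReal.ofReal (2 * (l / δ)) := by
    apply diamVol (by positivity)
    rintro x ⟨hxI, hxg⟩ y ⟨hyI, hyg⟩ hxy
    have h1 := hgslope x hxI y hyI hxy
    have h2 : |g y - g x| ≤ |g y| + |g x| := abs_sub _ _
    have h3 : g y - g x ≤ |g y - g x| := le_abs_self _
    rw [show 2 * (l / δ) = 2 * l / δ by ring, le_div_iff₀ hδ]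
    nlinarith
  -- bound on E ∩ A
  have hAvol : volume (E ∩ A) ≤ ENNReal.ofReal (2 * (η / l)) := by
    apply diamVol (by positivity)
    rintro x ⟨⟨hxI, hxh⟩, _, hxg⟩ y ⟨⟨hyI, hyh⟩, _, _⟩ hxy
    have hsub : Icc x y ⊆ I := Icc_subset_Icc hxI.1 hyI.2
    have hkey : l * (y - x) ≤ h y - h x := by
      apply (convex_Icc x y).mul_sub_le_image_sub_of_le_deriv (hhcont.mono hsub)
        ((hhdiff.mono hsub).mono interior_subset) ?_ x (left_mem_Icc.2 hxy)
        y (right_mem_Icc.2 hxy) hxy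
      intro z hz
      rw [interior_Icc] at hz
      have hzI : z ∈ I := hsub (Ioo_subset_Icc_self hz)
      have hzIoo : z ∈ Ioo a b := ⟨lt_of_le_of_lt hxI.1 hz.1, lt_of_lt_of_le hz.2 hyI.2⟩
      rw [derivEq z hzIoo]
      exact hxg.trans (hgmono x hxI z hzI hz.1.le)
    have h2 : h y - h x ≤ |h y| + |h x| := (le_abs_self _).trans (abs_sub _ _)
    rw [show 2 * (η / l) = 2 * η / l by ring, le_div_iff₀ hlpos]
    nlinarith
  -- bound on E ∩ B
  have hBvol : volume (E ∩ B) ≤ ENNReal.ofReal (2 * (η / l)) := by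
    apply diamVol (by positivity)
    rintro x ⟨⟨hxI, hxh⟩, _, _⟩ y ⟨⟨hyI, hyh⟩, _, hyg⟩ hxy
    have hsub : Icc x y ⊆ I := Icc_subset_Icc hxI.1 hyI.2
    have hkey : h y - h x ≤ -l * (y - x) := by
      apply (convex_Icc x y).image_sub_le_mul_sub_of_deriv_le (hhcont.mono hsub)
        ((hhdiff.mono hsub).mono interior_subset) ?_ x (left_mem_Icc.2 hxy)
        y (right_mem_Icc.2 hxy) hxy
      intro z hz
      rw [interior_Icc] at hz
      have hzI : z ∈ I := hsub (Ioo_subset_Icc_self hz)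
      have hzIoo : z ∈ Ioo a b := ⟨lt_of_le_of_lt hxI.1 hz.1, lt_of_lt_of_le hz.2 hyI.2⟩
      rw [derivEq z hzIoo]
      exact (hgmono z hzI y hyI hz.2.le).trans hyg
    have h2 : h x - h y ≤ |h x| + |h y| := (le_abs_self _).trans (abs_sub _ _)
    rw [show 2 * (η / l) = 2 * η / l by ring, le_div_iff₀ hlpos]
    nlinarith
  calc volume E ≤ volume ((E ∩ A) ∪ ((E ∩ B) ∪ M)) := measure_mono hsplit
    _ ≤ volume (E ∩ A) + (volume (E ∩ B) + volume M) :=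
        (measure_union_le _ _).trans (by gcongr; exact measure_union_le _ _)
    _ ≤ ENNReal.ofReal (2 * (η / l)) + (ENNReal.ofReal (2 * (η / l))
          + ENNReal.ofReal (2 * (l / δ))) := by gcongr
    _ ≤ _ := by
        rw [← ENNReal.ofReal_add (by positivity) (by positivity),
          ← ENNReal.ofReal_add (by positivity) (by positivity)]

theorem stmt3 : ∃ K > (0 : ℝ), ∀ (a b : ℝ), a ≤ b → ∀ h : ℝ → ℝ,
    ContDiffOn ℝ 2 h (Icc a b) → ∀ δ₁ δ₂ : ℝ,
    (∀ x ∈ Icc a b, δ₁ ≤ |derivWithin h (Icc a b) x|) →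
    (∀ x ∈ Icc a b, δ₂ ≤ |derivWithin (derivWithin h (Icc a b)) (Icc a b) x|) →
    ∀ η : ℝ, 0 < η →
    (0 < δ₁ → volume {x ∈ Icc a b | |h x| < η} ≤ ENNReal.ofReal (K * η / δ₁)) ∧
    (0 < δ₂ → volume {x ∈ Icc a b | |h x| < η} ≤
      ENNReal.ofReal (K * Real.sqrt (η / δ₂))) := by
  refine ⟨6, by norm_num, ?_⟩
  intro a b hab h hh δ₁ δ₂ hd1 hd2 η hη
  rcases eq_or_lt_of_le hab with rfl | hab'
  · have h0 : volume {x ∈ Icc a a | |h x| < η} = 0 := by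
      apply measure_mono_null (fun x hx => hx.1)
      simp [Icc_self]
    rw [h0]
    exact ⟨fun _ => zero_le, fun _ => zero_le⟩
  set I := Icc a b with hI
  have hUD : UniqueDiffOn ℝ I := uniqueDiffOn_Icc hab'
  have hhcont : ContinuousOn h I := hh.continuousOn
  have hhdiff : DifferentiableOn ℝ h I := hh.differentiableOn (by norm_num)
  have hgcont : ContinuousOn (derivWithin h I) I :=
    hh.continuousOn_derivWithin hUD (by norm_num)
  constructor
  · intro hδ₁
    refine (bound1 hhcont hhdiff hgcont hδ₁ hη hd1).trans (ENNReal.ofReal_le_ofReal ?_)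
    rw [div_le_div_iff_of_pos_right hδ₁]
    nlinarith
  · intro hδ₂
    have hgg2cont : ContinuousOn (derivWithin (derivWithin h I) I) I :=
      (hh.derivWithin (m := 1) hUD (by norm_num)).continuousOn_derivWithin hUD (by norm_num)
    have harith : 2 * (η / Real.sqrt (η * δ₂)) + (2 * (η / Real.sqrt (η * δ₂))
        + 2 * (Real.sqrt (η * δ₂) / δ₂)) ≤ 6 * Real.sqrt (η / δ₂) := by
      have hlpos : 0 < Real.sqrt (η * δ₂) := Real.sqrt_pos.mpr (by positivity)
      have hl2 : Real.sqrt (η * δ₂) ^ 2 = η * δ₂ := Real.sq_sqrt (by positivity)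
      have hll : (Real.sqrt η * Real.sqrt δ₂) ^ 2 = η * δ₂ := by
        rw [mul_pow, Real.sq_sqrt hη.le, Real.sq_sqrt hδ₂.le]
      have h1 : η / Real.sqrt (η * δ₂) = Real.sqrt (η / δ₂) := by
        rw [show η / δ₂ = (η / Real.sqrt (η * δ₂)) ^ 2 by
          field_simp; nlinarith [hll]]
        rw [Real.sqrt_sq (by positivity)]
      have h2 : Real.sqrt (η * δ₂) / δ₂ = Real.sqrt (η / δ₂) := by
        rw [show η / δ₂ = (Real.sqrt (η * δ₂) / δ₂) ^ 2 by
          field_simp; nlinarith [hll]]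
        rw [Real.sqrt_sq (by positivity)]
      rw [h1, h2]
      ring_nf
      linarith
    rcases signConst hgg2cont hδ₂ hd2 with hpos | hneg
    · exact (bound2pos hab' hh hδ₂ hη hpos).trans (ENNReal.ofReal_le_ofReal harith)
    · have hset : {x ∈ I | |h x| < η} = {x ∈ I | |(fun t => -h t) x| < η} := by
        ext x; simp [abs_neg]
      have hneg2 : ∀ x ∈ I, δ₂ ≤
          derivWithin (derivWithin (fun t => -h t) I) I x := by
        intro x hx
        have e1 : ∀ y ∈ I, derivWithin (fun t => -h t) I y = -derivWithin h I y :=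
          fun y hy => derivWithin.neg
        have e2 : derivWithin (derivWithin (fun t => -h t) I) I x
            = derivWithin (fun y => -derivWithin h I y) I x :=
          derivWithin_congr (fun y hy => e1 y hy) (e1 x hx)
        rw [e2, show derivWithin (fun y => -derivWithin h I y) I x
          = -derivWithin (derivWithin h I) I x from derivWithin.neg]
        linarith [hneg x hx]
      rw [hset]
      exact (bound2pos hab' hh.neg hδ₂ hη hneg2).trans (ENNReal.ofReal_le_ofReal harith)
end

section
/- Let I be a compact interval, let f: I → ℝ be a C² function with f''(x) ≠ 0 for all x ∈ I, let M := 1 + max_{x∈I} |f'(x)|, and let ψ: ℕ → (0,∞). If q₁, q₂, p are integers with |q₁| > 2M·|q₂| (so that q := max(|q₁|,|q₂|) = |q₁|), then the Lebesgue measure of μ(q₁,q₂,p) satisfies |μ(q₁,q₂,p)| ≤ 4·ψ(|q₁|)/|q₁|. -/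
open MeasureTheory Set

theorem stmt9 (a b : ℝ) (hab : a ≤ b) (f : ℝ → ℝ)
    (hf : ContDiffOn ℝ 2 f (Icc a b))
    (hne : ∀ x ∈ Icc a b, derivWithin (derivWithin f (Icc a b)) (Icc a b) x ≠ 0)
    (M : ℝ) (hM : IsGreatest ((fun x => |derivWithin f (Icc a b) x|) '' Icc a b) (M - 1))
    (ψ : ℕ → ℝ) (hψpos : ∀ q, 0 < ψ q)
    (q₁ q₂ p : ℤ) (hq : 2 * M * |(q₂ : ℝ)| < |(q₁ : ℝ)|) :
    volume {x ∈ Icc a b | |(q₁ : ℝ) * x + (q₂ : ℝ) * f x - (p : ℝ)| <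
        ψ (max q₁.natAbs q₂.natAbs)}
      ≤ ENNReal.ofReal (4 * ψ q₁.natAbs / |(q₁ : ℝ)|) := by
  set d := derivWithin f (Icc a b) with hd
  have hM1 : 0 ≤ M - 1 := by
    obtain ⟨x, hx, hxe⟩ := hM.1
    rw [← hxe]; positivity
  have hdbd : ∀ x ∈ Icc a b, |d x| ≤ M - 1 := fun x hx => hM.2 ⟨x, hx, rfl⟩
  have hq2M : |(q₂ : ℝ)| * M < |(q₁ : ℝ)| / 2 := by nlinarith [abs_nonneg (q₂ : ℝ)]
  have hq1pos : 0 < |(q₁ : ℝ)| := by nlinarith [abs_nonneg (q₂ : ℝ)]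
  have hmax : max q₁.natAbs q₂.natAbs = q₁.natAbs := by
    have h2 : (q₂.natAbs : ℝ) < (q₁.natAbs : ℝ) := by
      push_cast [Nat.cast_natAbs]
      nlinarith [abs_nonneg (q₂ : ℝ)]
    exact max_eq_left (le_of_lt (by exact_mod_cast h2))
  rw [hmax]
  set ψ₀ := ψ q₁.natAbs with hψ₀
  have hψ₀pos : 0 < ψ₀ := hψpos _
  set g : ℝ → ℝ := fun x => (q₁ : ℝ) * x + (q₂ : ℝ) * f x - (p : ℝ) with hg
  set S := {x ∈ Icc a b | |g x| < ψ₀} with hS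
  have hfd : DifferentiableOn ℝ f (Icc a b) := hf.differentiableOn (by norm_num)
  have hgder : ∀ x ∈ Ioo a b, HasDerivAt g ((q₁ : ℝ) + (q₂ : ℝ) * d x) x := by
    intro x hx
    have hxm : x ∈ Icc a b := Ioo_subset_Icc_self hx
    have hfx : HasDerivAt f (d x) x :=
      ((hfd x hxm).hasDerivWithinAt).hasDerivAt (Icc_mem_nhds hx.1 hx.2)
    have : HasDerivAt g ((q₁ : ℝ) * 1 + (q₂ : ℝ) * d x) x :=
      (((hasDerivAt_id x).const_mul (q₁ : ℝ)).add (hfx.const_mul (q₂ : ℝ))).sub_const _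
    simpa using this
  have hgcont : ContinuousOn g (Icc a b) := by
    apply ContinuousOn.sub
    · exact (continuousOn_id.const_smul (q₁ : ℝ)).add (hf.continuousOn.const_smul (q₂ : ℝ))
    · exact continuousOn_const
  have key : ∀ x ∈ S, ∀ y ∈ S, x ≤ y → y - x ≤ 4 * ψ₀ / |(q₁ : ℝ)| := by
    intro x hx y hy hxy
    rcases eq_or_lt_of_le hxy with rfl | hlt
    · have : 0 < 4 * ψ₀ / |(q₁ : ℝ)| := by positivity
      linarith
    · obtain ⟨c, hc, hc'⟩ := exists_hasDerivAt_eq_slope g (fun z => (q₁ : ℝ) + (q₂ : ℝ) * d z)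
        hlt (hgcont.mono (Icc_subset_Icc hx.1.1 hy.1.2))
        (fun z hz => hgder z ⟨lt_of_le_of_lt hx.1.1 hz.1, lt_of_lt_of_le hz.2 hy.1.2⟩)
      have hcm : c ∈ Icc a b := ⟨le_of_lt (lt_of_le_of_lt hx.1.1 hc.1),
        le_of_lt (lt_of_lt_of_le hc.2 hy.1.2)⟩
      have hdc : |d c| ≤ M - 1 := hdbd c hcm
      have hlb : |(q₁ : ℝ)| / 2 ≤ |(q₁ : ℝ) + (q₂ : ℝ) * d c| := by
        have h1 : |(q₂ : ℝ) * d c| ≤ |(q₂ : ℝ)| * (M - 1) := by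
          rw [abs_mul]
          exact mul_le_mul_of_nonneg_left hdc (abs_nonneg _)
        have h2 : |(q₁ : ℝ)| ≤ |(q₁ : ℝ) + (q₂ : ℝ) * d c| + |(q₂ : ℝ) * d c| := by
          have := abs_sub ((q₁ : ℝ) + (q₂ : ℝ) * d c) ((q₂ : ℝ) * d c)
          simpa using this
        nlinarith [abs_nonneg (q₂ : ℝ)]
      have hslope : |g y - g x| < 2 * ψ₀ := by
        have := abs_sub (g y) (g x)
        calc |g y - g x| ≤ |g y| + |g x| := abs_sub _ _
          _ < 2 * ψ₀ := by have := hx.2; have := hy.2; linarith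
      have heq : |g y - g x| = |(q₁ : ℝ) + (q₂ : ℝ) * d c| * (y - x) := by
        rw [hc', abs_div, abs_of_pos (by linarith : (0:ℝ) < y - x)]
        exact (div_mul_cancel₀ _ (sub_ne_zero.mpr hlt.ne')).symm
      have h3 : |(q₁ : ℝ)| / 2 * (y - x) < 2 * ψ₀ := by
        calc |(q₁ : ℝ)| / 2 * (y - x) ≤ |(q₁ : ℝ) + (q₂ : ℝ) * d c| * (y - x) :=
              mul_le_mul_of_nonneg_right hlb (by linarith)
          _ = |g y - g x| := heq.symm
          _ < 2 * ψ₀ := hslope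
      rw [le_div_iff₀ hq1pos]
      nlinarith
  calc volume S ≤ EMetric.diam S := Real.volume_le_diam S
    _ ≤ ENNReal.ofReal (4 * ψ₀ / |(q₁ : ℝ)|) := by
        apply EMetric.diam_le
        intro x hx y hy
        rw [edist_dist]
        apply ENNReal.ofReal_le_ofReal
        rw [Real.dist_eq, abs_sub_le_iff]
        constructor
        · rcases le_total y x with h | h
          · linarith [key y hy x hx h]
          · have := key x hx y hy h
            have : 0 < 4 * ψ₀ / |(q₁ : ℝ)| := by positivity
            linarith
        · rcases le_total x y with h | h
          · linarith [key x hx y hy h]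
          · have : 0 < 4 * ψ₀ / |(q₁ : ℝ)| := by positivity
            linarith [key y hy x hx h]
end

section
/- Let f: ℝ → ℝ be a C² function with 0 < c₁ ≤ |f''(x)| ≤ c₂ < ∞ for all x ∈ ℝ and with f'' of constant sign, let I ⊆ ℝ be a compact interval, let M := 1 + max_{x∈I} |f'(x)|, and let ψ: ℕ → (0,∞) be monotonically decreasing. There is a constant K > 0 depending only on c₁ and c₂ with the following property: for integers q₁, q₂ with q₂ ≠ 0 and |q₁| ≤ 2M|q₂|, set q := max(|q₁|,|q₂|), F(x) := q₁x + q₂f(x), let x₀ be the unique point with F'(x₀) = 0, and let p₀ be the unique integer with −1/2 < F(x₀) − p₀ ≤ 1/2. If ψ(q) ≤ 1/8 and p ∈ ℤ with p ≠ p₀, then the Lebesgue measure of μ(q₁,q₂,p) satisfies |μ(q₁,q₂,p)| ≤ K·ψ(q)·(|q₂|·|p − p₀|)^{−1/2}. -/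
open MeasureTheory Set

private lemma mvt_aux (g g' : ℝ → ℝ) (hg : ∀ x, HasDerivAt g (g' x) x) {u v : ℝ}
    (huv : u < v) : ∃ c ∈ Set.Ioo u v, g v - g u = g' c * (v - u) := by
  obtain ⟨c, hc, hc'⟩ := exists_hasDerivAt_eq_slope g g' huv
    (fun x _ => (hg x).continuousAt.continuousWithinAt) (fun x _ => hg x)
  refine ⟨c, hc, ?_⟩
  rw [hc', div_mul_cancel₀ _ (sub_ne_zero.2 huv.ne')]

set_option maxHeartbeats 1000000 in
theorem stmt14 (c₁ c₂ : ℝ) (hc₁ : 0 < c₁) (hc : c₁ ≤ c₂) :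
    ∃ K > (0 : ℝ), ∀ f : ℝ → ℝ, ContDiff ℝ 2 f →
      (∀ x, c₁ ≤ |deriv (deriv f) x| ∧ |deriv (deriv f) x| ≤ c₂) →
      ((∀ x, 0 < deriv (deriv f) x) ∨ (∀ x, deriv (deriv f) x < 0)) →
      ∀ a b : ℝ, a ≤ b →
      ∀ M : ℝ, IsGreatest ((fun x => |deriv f x|) '' Icc a b) (M - 1) →
      ∀ ψ : ℕ → ℝ, (∀ q, 0 < ψ q) → Antitone ψ →
      ∀ q₁ q₂ : ℤ, q₂ ≠ 0 → |(q₁ : ℝ)| ≤ 2 * M * |(q₂ : ℝ)| →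
      ∀ x₀ : ℝ, (q₁ : ℝ) + (q₂ : ℝ) * deriv f x₀ = 0 →
      ∀ p₀ : ℤ, -(1/2) < ((q₁ : ℝ) * x₀ + (q₂ : ℝ) * f x₀) - (p₀ : ℝ) →
        ((q₁ : ℝ) * x₀ + (q₂ : ℝ) * f x₀) - (p₀ : ℝ) ≤ 1/2 →
      ψ (max q₁.natAbs q₂.natAbs) ≤ 1/8 →
      ∀ p : ℤ, p ≠ p₀ →
      volume {x ∈ Icc a b | |(q₁ : ℝ) * x + (q₂ : ℝ) * f x - (p : ℝ)| <
          ψ (max q₁.natAbs q₂.natAbs)}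
        ≤ ENNReal.ofReal (K * ψ (max q₁.natAbs q₂.natAbs) /
            Real.sqrt (|(q₂ : ℝ)| * |(p : ℝ) - (p₀ : ℝ)|)) := by
  have hc₂ : 0 < c₂ := lt_of_lt_of_le hc₁ hc
  refine ⟨4 * Real.sqrt (8 * c₂ / 3) / c₁, by positivity, ?_⟩
  intro f hf hbd _hsign a b _hab M _hM ψ hψpos _hψa q₁ q₂ hq₂ _hq1 x₀ hx₀ p₀ hp₀l hp₀u hψ8
    p hp
  set ε : ℝ := ψ (max q₁.natAbs q₂.natAbs) with hεdef
  have hε0 : 0 < ε := hψpos _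
  have hq₂0 : (0:ℝ) < |(q₂:ℝ)| := by
    simpa using abs_pos.2 (Int.cast_ne_zero.2 hq₂ : ((q₂:ℝ) ≠ 0))
  set D : ℝ := |(p:ℝ) - (p₀:ℝ)| with hDdef
  have hD1 : (1:ℝ) ≤ D := by
    have h := Int.one_le_abs (sub_ne_zero.2 hp)
    rw [hDdef]
    have : ((|p - p₀| : ℤ) : ℝ) = |(p:ℝ) - (p₀:ℝ)| := by push_cast; ring_nf
    rw [← this]; exact_mod_cast h
  -- differentiability facts
  have hfd : Differentiable ℝ f := hf.differentiable (by norm_num)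
  have hf'd : Differentiable ℝ (deriv f) := by
    have h2 : ContDiff ℝ ((1:WithTop ℕ∞) + 1) f := by exact_mod_cast hf
    exact ((contDiff_succ_iff_deriv.mp h2).2.2).differentiable one_ne_zero
  set F : ℝ → ℝ := fun x => (q₁:ℝ) * x + (q₂:ℝ) * f x with hFdef
  set G : ℝ → ℝ := fun x => (q₁:ℝ) + (q₂:ℝ) * deriv f x with hGdef
  have hF : ∀ x, HasDerivAt F (G x) x := by
    intro x
    have h1 : HasDerivAt (fun x : ℝ => (q₁:ℝ) * x) (q₁:ℝ) x := by
      simpa using (hasDerivAt_id x).const_mul (q₁:ℝ)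
    exact h1.add (((hfd x).hasDerivAt).const_mul (q₂:ℝ))
  have hG : ∀ x, HasDerivAt G ((q₂:ℝ) * deriv (deriv f) x) x := fun x =>
    (((hf'd x).hasDerivAt).const_mul (q₂:ℝ)).const_add (q₁:ℝ)
  have hGx₀ : G x₀ = 0 := hx₀
  -- bounds on |G ξ|
  have hGbound : ∀ ξ : ℝ, c₁ * |(q₂:ℝ)| * |ξ - x₀| ≤ |G ξ| ∧
      |G ξ| ≤ c₂ * |(q₂:ℝ)| * |ξ - x₀| := by
    intro ξ
    rcases lt_trichotomy ξ x₀ with h | h | h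
    · obtain ⟨η, _, hη⟩ := mvt_aux G _ hG h
      rw [hGx₀] at hη
      have hrep : |G ξ| = |(q₂:ℝ)| * |deriv (deriv f) η| * |ξ - x₀| := by
        have : G ξ = (q₂:ℝ) * deriv (deriv f) η * (ξ - x₀) := by linarith [hη]
        rw [this, abs_mul, abs_mul]
      rw [hrep]
      obtain ⟨hb1, hb2⟩ := hbd η
      constructor <;> nlinarith [mul_nonneg hq₂0.le (abs_nonneg (ξ - x₀)), hb1, hb2]
    · subst h
      rw [hGx₀]
      simp
    · obtain ⟨η, _, hη⟩ := mvt_aux G _ hG h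
      rw [hGx₀] at hη
      have hrep : |G ξ| = |(q₂:ℝ)| * |deriv (deriv f) η| * |ξ - x₀| := by
        have : G ξ = (q₂:ℝ) * deriv (deriv f) η * (ξ - x₀) := by linarith [hη]
        rw [this, abs_mul, abs_mul]
      rw [hrep]
      obtain ⟨hb1, hb2⟩ := hbd η
      constructor <;> nlinarith [mul_nonneg hq₂0.le (abs_nonneg (ξ - x₀)), hb1, hb2]
  set r : ℝ := Real.sqrt (3 * D / (8 * (c₂ * |(q₂:ℝ)|))) with hrdef
  have hr0 : 0 < r := Real.sqrt_pos.2 (by positivity)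
  -- every point of the set is at distance ≥ r from x₀
  have key2 : ∀ x : ℝ, |F x - (p:ℝ)| < ε → r ≤ |x - x₀| := by
    intro x hx
    have hFp₀ : |F x₀ - (p₀:ℝ)| ≤ 1/2 := abs_le.2 ⟨by linarith [hp₀l], hp₀u⟩
    have h4 : |(p:ℝ) - (p₀:ℝ)| ≤ |(p:ℝ) - F x₀| + |F x₀ - (p₀:ℝ)| := abs_sub_le _ _ _
    have h5 : |(p:ℝ) - F x₀| ≤ |(p:ℝ) - F x| + |F x - F x₀| := abs_sub_le _ _ _
    have h6 : |(p:ℝ) - F x| = |F x - (p:ℝ)| := abs_sub_comm _ _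
    have h1 : 3/8 * D ≤ |F x - F x₀| := by
      rw [hDdef] at hD1 ⊢
      linarith [hψ8, hx]
    have h7 : |F x - F x₀| ≤ c₂ * |(q₂:ℝ)| * (x - x₀)^2 := by
      rcases lt_trichotomy x x₀ with h | h | h
      · obtain ⟨ξ, hξ, hrep⟩ := mvt_aux F G hF h
        have habs : |F x - F x₀| = |G ξ| * |x₀ - x| := by
          rw [← abs_mul, ← hrep, abs_sub_comm]
        rw [habs]
        have hGle : |G ξ| ≤ c₂ * |(q₂:ℝ)| * |ξ - x₀| := (hGbound ξ).2
        have hle : |ξ - x₀| ≤ |x - x₀| := by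
          rw [abs_sub_comm ξ x₀, abs_sub_comm x x₀, abs_of_pos (by linarith [hξ.2] : 0 < x₀ - ξ),
            abs_of_pos (by linarith : 0 < x₀ - x)]
          linarith [hξ.1]
        calc |G ξ| * |x₀ - x| = |G ξ| * |x - x₀| := by rw [abs_sub_comm x₀ x]
        _ ≤ (c₂ * |(q₂:ℝ)| * |ξ - x₀|) * |x - x₀| :=
          mul_le_mul_of_nonneg_right hGle (abs_nonneg _)
        _ ≤ (c₂ * |(q₂:ℝ)| * |x - x₀|) * |x - x₀| := by
          have := mul_le_mul_of_nonneg_right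
            (mul_le_mul_of_nonneg_left hle (mul_nonneg hc₂.le hq₂0.le)) (abs_nonneg (x - x₀))
          nlinarith [this]
        _ = c₂ * |(q₂:ℝ)| * (x - x₀)^2 := by rw [← sq_abs]; ring
      · subst h; simp
      · obtain ⟨ξ, hξ, hrep⟩ := mvt_aux F G hF h
        have habs : |F x - F x₀| = |G ξ| * |x - x₀| := by
          rw [← abs_mul, ← hrep]
        rw [habs]
        have hGle : |G ξ| ≤ c₂ * |(q₂:ℝ)| * |ξ - x₀| := (hGbound ξ).2
        have hle : |ξ - x₀| ≤ |x - x₀| := by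
          rw [abs_of_pos (by linarith [hξ.1] : 0 < ξ - x₀), abs_of_pos (by linarith : 0 < x - x₀)]
          linarith [hξ.2]
        calc |G ξ| * |x - x₀| ≤ (c₂ * |(q₂:ℝ)| * |ξ - x₀|) * |x - x₀| :=
          mul_le_mul_of_nonneg_right hGle (abs_nonneg _)
        _ ≤ (c₂ * |(q₂:ℝ)| * |x - x₀|) * |x - x₀| := by
          have := mul_le_mul_of_nonneg_right
            (mul_le_mul_of_nonneg_left hle (mul_nonneg hc₂.le hq₂0.le)) (abs_nonneg (x - x₀))
          nlinarith [this]
        _ = c₂ * |(q₂:ℝ)| * (x - x₀)^2 := by rw [← sq_abs]; ring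
    have h8 : 3 * D / (8 * (c₂ * |(q₂:ℝ)|)) ≤ (x - x₀)^2 := by
      rw [div_le_iff₀ (by positivity)]
      nlinarith
    calc r ≤ Real.sqrt ((x - x₀)^2) := Real.sqrt_le_sqrt h8
    _ = |x - x₀| := Real.sqrt_sq_eq_abs _
  set L : ℝ := 2 * ε / (c₁ * (|(q₂:ℝ)| * r)) with hLdef
  have hL0 : 0 ≤ L := by positivity
  -- pair bound on each side of x₀
  have keypair : ∀ x y : ℝ, |F x - (p:ℝ)| < ε → |F y - (p:ℝ)| < ε →
      ((x₀ ≤ x ∧ x₀ ≤ y) ∨ (x ≤ x₀ ∧ y ≤ x₀)) → x < y → y - x ≤ L := by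
    intro x y hx hy hside hxy
    obtain ⟨ξ, hξ, hrep⟩ := mvt_aux F G hF hxy
    have hdist : r ≤ |ξ - x₀| := by
      rcases hside with ⟨h1, h2⟩ | ⟨h1, h2⟩
      · have := key2 x hx
        rw [abs_of_nonneg (by linarith : (0:ℝ) ≤ x - x₀)] at this
        rw [abs_of_pos (by linarith [hξ.1] : (0:ℝ) < ξ - x₀)]
        linarith [hξ.1]
      · have := key2 y hy
        rw [abs_of_nonpos (by linarith : y - x₀ ≤ 0)] at this
        rw [abs_of_neg (by linarith [hξ.2] : ξ - x₀ < 0)]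
        linarith [hξ.2]
    have hGlow : c₁ * |(q₂:ℝ)| * r ≤ |G ξ| := by
      have := (hGbound ξ).1
      nlinarith [mul_nonneg hc₁.le hq₂0.le]
    have hFF : |F y - F x| < 2 * ε := by
      calc |F y - F x| ≤ |F y - (p:ℝ)| + |(p:ℝ) - F x| := abs_sub_le _ _ _
      _ = |F y - (p:ℝ)| + |F x - (p:ℝ)| := by rw [abs_sub_comm (p:ℝ) (F x)]
      _ < 2 * ε := by linarith
    have hFFeq : |F y - F x| = |G ξ| * (y - x) := by
      rw [hrep, abs_mul, abs_of_pos (by linarith : (0:ℝ) < y - x)]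
    rw [hLdef, le_div_iff₀ (by positivity)]
    nlinarith
  -- measure bound
  set T := {x ∈ Icc a b | |(q₁:ℝ) * x + (q₂:ℝ) * f x - (p:ℝ)| < ε} with hTdef
  have hmemF : ∀ x ∈ T, |F x - (p:ℝ)| < ε := fun x hx => hx.2
  have hsub : T ⊆ (T ∩ Iic x₀) ∪ (T ∩ Ici x₀) := by
    intro x hx
    rcases le_total x x₀ with h | h
    · exact Or.inl ⟨hx, h⟩
    · exact Or.inr ⟨hx, h⟩
  have hdiam : ∀ s : Set ℝ, (∀ x ∈ s, ∀ y ∈ s, dist x y ≤ L) →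
      volume s ≤ ENNReal.ofReal L := by
    intro s hs
    refine le_trans (Real.volume_le_diam s) (EMetric.diam_le ?_)
    intro x hx y hy
    exact (edist_le_ofReal hL0).2 (hs x hx y hy)
  have hA : volume (T ∩ Iic x₀) ≤ ENNReal.ofReal L := by
    refine hdiam _ ?_
    intro x hx y hy
    rw [Real.dist_eq]
    rcases lt_trichotomy x y with h | h | h
    · rw [abs_of_neg (by linarith : x - y < 0)]
      have := keypair x y (hmemF x hx.1) (hmemF y hy.1) (Or.inr ⟨hx.2, hy.2⟩) h
      linarith
    · subst h; simpa using hL0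
    · rw [abs_of_pos (by linarith : (0:ℝ) < x - y)]
      exact keypair y x (hmemF y hy.1) (hmemF x hx.1) (Or.inr ⟨hy.2, hx.2⟩) h
  have hB : volume (T ∩ Ici x₀) ≤ ENNReal.ofReal L := by
    refine hdiam _ ?_
    intro x hx y hy
    rw [Real.dist_eq]
    rcases lt_trichotomy x y with h | h | h
    · rw [abs_of_neg (by linarith : x - y < 0)]
      have := keypair x y (hmemF x hx.1) (hmemF y hy.1) (Or.inl ⟨hx.2, hy.2⟩) h
      linarith
    · subst h; simpa using hL0
    · rw [abs_of_pos (by linarith : (0:ℝ) < x - y)]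
      exact keypair y x (hmemF y hy.1) (hmemF x hx.1) (Or.inl ⟨hy.2, hx.2⟩) h
  have hvol : volume T ≤ ENNReal.ofReal (L + L) := by
    calc volume T ≤ volume ((T ∩ Iic x₀) ∪ (T ∩ Ici x₀)) := measure_mono hsub
    _ ≤ volume (T ∩ Iic x₀) + volume (T ∩ Ici x₀) := measure_union_le _ _
    _ ≤ ENNReal.ofReal L + ENNReal.ofReal L := add_le_add hA hB
    _ = ENNReal.ofReal (L + L) := (ENNReal.ofReal_add hL0 hL0).symm
  refine le_trans hvol (ENNReal.ofReal_le_ofReal ?_)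
  -- final arithmetic
  have hq2ne : |(q₂:ℝ)| ≠ 0 := ne_of_gt hq₂0
  have hc2ne : c₂ ≠ 0 := ne_of_gt hc₂
  have hqr : |(q₂:ℝ)| * r = Real.sqrt (3 * (|(q₂:ℝ)| * D) / (8 * c₂)) := by
    have hshow : 3 * (|(q₂:ℝ)| * D) / (8 * c₂)
        = |(q₂:ℝ)|^2 * (3 * D / (8 * (c₂ * |(q₂:ℝ)|))) := by
      field_simp
    rw [hrdef, hshow, Real.sqrt_mul (sq_nonneg _), Real.sqrt_sq (abs_nonneg _)]
  have hsq2 : Real.sqrt (8 * c₂ / 3) * Real.sqrt (3 * (|(q₂:ℝ)| * D) / (8 * c₂)) =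
      Real.sqrt (|(q₂:ℝ)| * D) := by
    rw [← Real.sqrt_mul (by positivity)]
    congr 1
    field_simp
  have hs2pos : 0 < Real.sqrt (3 * (|(q₂:ℝ)| * D) / (8 * c₂)) := Real.sqrt_pos.2 (by positivity)
  have hs1pos : 0 < Real.sqrt (8 * c₂ / 3) := Real.sqrt_pos.2 (by positivity)
  refine le_of_eq ?_
  rw [hLdef, hqr, ← hsq2]
  field_simp
  ring
end

section
/- Let f: ℝ → ℝ be a C² function with 0 < c₁ ≤ |f''(x)| ≤ c₂ < ∞ for all x ∈ ℝ and with f'' of constant sign, let I ⊆ ℝ be a compact interval, and let ψ: ℕ → (0,∞). There is a constant K > 0 depending only on c₁ and c₂ with the following property: for integers q₁, q₂ with q₂ ≠ 0, set q := max(|q₁|,|q₂|), F(x) := q₁x + q₂f(x), let x₀ be the unique point with F'(x₀) = 0, and let p₀ be the unique integer with −1/2 < F(x₀) − p₀ ≤ 1/2. If ‖F(x₀)‖ ≥ 2ψ(q), then the Lebesgue measure of μ(q₁,q₂,p₀) satisfies |μ(q₁,q₂,p₀)| ≤ K·ψ(q)·(|q₂|·‖F(x₀)‖)^{−1/2}.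 -/
open MeasureTheory Set

/-- Distance from a real number to the nearest integer. -/
noncomputable def distNearestInt (y : ℝ) : ℝ := |y - round y|

private lemma mvt' (g g' : ℝ → ℝ) (hg : ∀ t, HasDerivAt g (g' t) t) {u v : ℝ} (h : u < v) :
    ∃ ξ ∈ Ioo u v, g v - g u = g' ξ * (v - u) := by
  obtain ⟨ξ, hξ, hs⟩ := exists_hasDerivAt_eq_slope g g' h
    (fun x _ => (hg x).continuousAt.continuousWithinAt) (fun x _ => hg x)
  exact ⟨ξ, hξ, by rw [hs, div_mul_cancel₀ _ (sub_ne_zero.mpr h.ne')]⟩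

private lemma exists_slope (g g' : ℝ → ℝ) (hg : ∀ t, HasDerivAt g (g' t) t) (x₀ t : ℝ)
    (h : t ≠ x₀) : ∃ ξ, |ξ - x₀| ≤ |t - x₀| ∧ g t - g x₀ = g' ξ * (t - x₀) := by
  rcases h.lt_or_gt with h | h
  · obtain ⟨ξ, hξ, he⟩ := mvt' g g' hg h
    refine ⟨ξ, ?_, by linear_combination -he⟩
    rw [abs_of_neg (by linarith [hξ.2] : ξ - x₀ < 0), abs_of_neg (by linarith : t - x₀ < 0)]
    linarith [hξ.1]
  · obtain ⟨ξ, hξ, he⟩ := mvt' g g' hg h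
    refine ⟨ξ, ?_, by linear_combination he⟩
    rw [abs_of_pos (by linarith [hξ.1] : (0:ℝ) < ξ - x₀), abs_of_pos (by linarith : (0:ℝ) < t - x₀)]
    linarith [hξ.2]

private lemma key (c C : ℝ) (hc : 0 < c) (hC : 0 < C) (F F' F'' : ℝ → ℝ)
    (hF : ∀ x, HasDerivAt F (F' x) x) (hF' : ∀ x, HasDerivAt F' (F'' x) x)
    (hlow : ∀ x, c ≤ |F'' x|) (hup : ∀ x, |F'' x| ≤ C)
    (x₀ : ℝ) (hx₀ : F' x₀ = 0) (p δ ψ : ℝ) (hψ : 0 < ψ)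
    (hδp : δ ≤ |F x₀ - p|) (h2ψ : 2 * ψ ≤ δ) (a b : ℝ) :
    volume {x ∈ Icc a b | |F x - p| < ψ} ≤
      ENNReal.ofReal (8 * ψ / (c * Real.sqrt (δ / (2 * C)))) := by
  have hδ : 0 < δ := by linarith
  set r : ℝ := Real.sqrt (δ / (2 * C)) with hrdef
  have hr : 0 < r := Real.sqrt_pos.mpr (by positivity)
  have hr2 : r ^ 2 = δ / (2 * C) := Real.sq_sqrt (by positivity)
  -- derivative bounds
  have claimB : ∀ t, c * |t - x₀| ≤ |F' t| := by
    intro t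
    rcases eq_or_ne t x₀ with rfl | h
    · simp [hx₀]
    · obtain ⟨ξ, _, he⟩ := exists_slope F' F'' hF' x₀ t h
      have : F' t = F'' ξ * (t - x₀) := by rw [← he, hx₀]; ring
      rw [this, abs_mul]
      exact mul_le_mul_of_nonneg_right (hlow ξ) (abs_nonneg _)
  have claimA : ∀ t, |F' t| ≤ C * |t - x₀| := by
    intro t
    rcases eq_or_ne t x₀ with rfl | h
    · simp [hx₀, le_of_lt hC]
    · obtain ⟨ξ, _, he⟩ := exists_slope F' F'' hF' x₀ t h
      have : F' t = F'' ξ * (t - x₀) := by rw [← he, hx₀]; ring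
      rw [this, abs_mul]
      exact mul_le_mul_of_nonneg_right (hup ξ) (abs_nonneg _)
  have claimC : ∀ x, |F x - F x₀| ≤ C * |x - x₀| ^ 2 := by
    intro x
    rcases eq_or_ne x x₀ with rfl | h
    · simp
    · obtain ⟨ξ, hξ, he⟩ := exists_slope F F' hF x₀ x h
      rw [he, abs_mul]
      calc |F' ξ| * |x - x₀| ≤ (C * |x - x₀|) * |x - x₀| := by
            refine mul_le_mul_of_nonneg_right ((claimA ξ).trans ?_) (abs_nonneg _)
            exact mul_le_mul_of_nonneg_left hξ (le_of_lt hC)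
        _ = C * |x - x₀| ^ 2 := by ring
  -- points of the set are far from x₀
  have claimD : ∀ x, |F x - p| < ψ → r ≤ |x - x₀| := by
    intro x hx
    have h1 : δ - ψ ≤ |F x - F x₀| := by
      have := abs_sub_abs_le_abs_sub (F x₀ - p) (F x - p)
      have h2 : |F x₀ - p - (F x - p)| = |F x - F x₀| := by rw [abs_sub_comm]; ring_nf
      linarith [hx, hδp, abs_sub_abs_le_abs_sub (F x₀ - p) (F x - p), h2 ▸ this]
    have h3 : r ^ 2 ≤ |x - x₀| ^ 2 := by
      rw [hr2]
      rw [div_le_iff₀ (by positivity)]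
      nlinarith [claimC x, h1]
    calc r = Real.sqrt (r ^ 2) := (Real.sqrt_sq hr.le).symm
      _ ≤ Real.sqrt (|x - x₀| ^ 2) := Real.sqrt_le_sqrt h3
      _ = |x - x₀| := Real.sqrt_sq (abs_nonneg _)
  set L : ℝ := 2 * ψ / (c * r) with hL
  have hLpos : 0 < L := by positivity
  -- expansivity on each branch
  have claimE : ∀ x y, |F x - p| < ψ → |F y - p| < ψ → x₀ ≤ x → x₀ ≤ y → x < y →
      y - x ≤ L := by
    intro x y hx hy hx₀x hx₀y hxy
    obtain ⟨ξ, hξ, he⟩ := mvt' F F' hF hxy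
    have hrx : r ≤ x - x₀ := by
      have := claimD x hx; rwa [abs_of_nonneg (by linarith)] at this
    have hξb : c * r ≤ |F' ξ| := by
      refine le_trans ?_ (claimB ξ)
      have : r ≤ |ξ - x₀| := by
        rw [abs_of_pos (by linarith [hξ.1] : (0:ℝ) < ξ - x₀)]; linarith [hξ.1]
      nlinarith
    have h2 : |F y - F x| < 2 * ψ := by
      calc |F y - F x| = |(F y - p) - (F x - p)| := by ring_nf
        _ ≤ |F y - p| + |F x - p| := abs_sub _ _
        _ < 2 * ψ := by linarith
    have h3 : c * r * (y - x) ≤ 2 * ψ := by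
      have : |F y - F x| = |F' ξ| * (y - x) := by
        rw [he, abs_mul, abs_of_pos (by linarith : (0:ℝ) < y - x)]
      nlinarith
    rw [hL, le_div_iff₀ (by positivity)]
    linarith
  have claimE' : ∀ x y, |F x - p| < ψ → |F y - p| < ψ → x ≤ x₀ → y ≤ x₀ → x < y →
      y - x ≤ L := by
    intro x y hx hy hx₀x hx₀y hxy
    obtain ⟨ξ, hξ, he⟩ := mvt' F F' hF hxy
    have hry : r ≤ x₀ - y := by
      have := claimD y hy; rwa [abs_of_nonpos (by linarith), neg_sub] at this
    have hξb : c * r ≤ |F' ξ| := by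
      refine le_trans ?_ (claimB ξ)
      have : r ≤ |ξ - x₀| := by
        rw [abs_of_neg (by linarith [hξ.2] : ξ - x₀ < 0)]; linarith [hξ.2]
      nlinarith
    have h2 : |F y - F x| < 2 * ψ := by
      calc |F y - F x| = |(F y - p) - (F x - p)| := by ring_nf
        _ ≤ |F y - p| + |F x - p| := abs_sub _ _
        _ < 2 * ψ := by linarith
    have h3 : c * r * (y - x) ≤ 2 * ψ := by
      have : |F y - F x| = |F' ξ| * (y - x) := by
        rw [he, abs_mul, abs_of_pos (by linarith : (0:ℝ) < y - x)]
      nlinarith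
    rw [hL, le_div_iff₀ (by positivity)]
    linarith
  -- measure estimate
  set S : Set ℝ := {x ∈ Icc a b | |F x - p| < ψ} with hS
  have hbranch : ∀ T : Set ℝ, T ⊆ S →
      (∀ x ∈ T, ∀ y ∈ T, x < y → y - x ≤ L) → volume T ≤ ENNReal.ofReal (2 * L) := by
    intro T hTS hdiam
    rcases T.eq_empty_or_nonempty with rfl | ⟨t₀, ht₀⟩
    · simp
    · have hsub : T ⊆ Icc (t₀ - L) (t₀ + L) := by
        intro x hx
        rcases lt_trichotomy x t₀ with h | rfl | h
        · have := hdiam x hx t₀ ht₀ h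
          exact ⟨by linarith, by linarith⟩
        · exact ⟨by linarith, by linarith⟩
        · have := hdiam t₀ ht₀ x hx h
          exact ⟨by linarith, by linarith⟩
      calc volume T ≤ volume (Icc (t₀ - L) (t₀ + L)) := measure_mono hsub
        _ = ENNReal.ofReal (2 * L) := by rw [Real.volume_Icc]; ring_nf
  have hsub : S ⊆ (S ∩ Ici x₀) ∪ (S ∩ Iic x₀) := by
    intro x hx
    rcases le_total x₀ x with h | h
    · exact Or.inl ⟨hx, h⟩
    · exact Or.inr ⟨hx, h⟩
  have hA : volume (S ∩ Ici x₀) ≤ ENNReal.ofReal (2 * L) :=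
    hbranch _ inter_subset_left
      (fun x hx y hy hxy => claimE x y hx.1.2 hy.1.2 hx.2 hy.2 hxy)
  have hB : volume (S ∩ Iic x₀) ≤ ENNReal.ofReal (2 * L) :=
    hbranch _ inter_subset_left
      (fun x hx y hy hxy => claimE' x y hx.1.2 hy.1.2 hx.2 hy.2 hxy)
  calc volume S ≤ volume ((S ∩ Ici x₀) ∪ (S ∩ Iic x₀)) := measure_mono hsub
    _ ≤ volume (S ∩ Ici x₀) + volume (S ∩ Iic x₀) := measure_union_le _ _
    _ ≤ ENNReal.ofReal (2 * L) + ENNReal.ofReal (2 * L) := add_le_add hA hB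
    _ = ENNReal.ofReal (8 * ψ / (c * r)) := by
        rw [← ENNReal.ofReal_add (by positivity) (by positivity)]
        congr 1
        rw [hL]
        ring

theorem stmt15 (c₁ c₂ : ℝ) (hc₁ : 0 < c₁) (hc : c₁ ≤ c₂) :
    ∃ K > (0 : ℝ), ∀ f : ℝ → ℝ, ContDiff ℝ 2 f →
      (∀ x, c₁ ≤ |deriv (deriv f) x| ∧ |deriv (deriv f) x| ≤ c₂) →
      ((∀ x, 0 < deriv (deriv f) x) ∨ (∀ x, deriv (deriv f) x < 0)) →
      ∀ a b : ℝ, a ≤ b →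
      ∀ ψ : ℕ → ℝ, (∀ q, 0 < ψ q) →
      ∀ q₁ q₂ : ℤ, q₂ ≠ 0 →
      ∀ x₀ : ℝ, (q₁ : ℝ) + (q₂ : ℝ) * deriv f x₀ = 0 →
      ∀ p₀ : ℤ, -(1/2) < ((q₁ : ℝ) * x₀ + (q₂ : ℝ) * f x₀) - (p₀ : ℝ) →
        ((q₁ : ℝ) * x₀ + (q₂ : ℝ) * f x₀) - (p₀ : ℝ) ≤ 1/2 →
      2 * ψ (max q₁.natAbs q₂.natAbs) ≤
          distNearestInt ((q₁ : ℝ) * x₀ + (q₂ : ℝ) * f x₀) →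
      volume {x ∈ Icc a b | |(q₁ : ℝ) * x + (q₂ : ℝ) * f x - (p₀ : ℝ)| <
          ψ (max q₁.natAbs q₂.natAbs)}
        ≤ ENNReal.ofReal (K * ψ (max q₁.natAbs q₂.natAbs) /
            Real.sqrt (|(q₂ : ℝ)| *
              distNearestInt ((q₁ : ℝ) * x₀ + (q₂ : ℝ) * f x₀))) := by
  have hc₂ : 0 < c₂ := lt_of_lt_of_le hc₁ hc
  refine ⟨8 * Real.sqrt (2 * c₂) / c₁, by positivity, ?_⟩
  intro f hf hbound _hsign a b _hab ψ hψ q₁ q₂ hq₂ x₀ hx₀ p₀ _hp₀l _hp₀u hδ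
  set ψq : ℝ := ψ (max q₁.natAbs q₂.natAbs) with hψq
  have hψqpos : 0 < ψq := hψ _
  have hq2pos : (0:ℝ) < |(q₂:ℝ)| := by
    simp only [abs_pos, ne_eq, Int.cast_eq_zero]; exact hq₂
  set δ : ℝ := distNearestInt ((q₁ : ℝ) * x₀ + (q₂ : ℝ) * f x₀) with hδdef
  have hδpos : 0 < δ := lt_of_lt_of_le (by positivity) hδ
  -- differentiability
  have hfd : Differentiable ℝ f := hf.differentiable (by norm_num)
  have hf'd : Differentiable ℝ (deriv f) := by
    have := (contDiff_succ_iff_deriv.mp (show ContDiff ℝ (1+1) f by exact_mod_cast hf))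
    exact this.2.2.differentiable (by norm_num)
  have hF : ∀ x, HasDerivAt (fun x => (q₁ : ℝ) * x + (q₂ : ℝ) * f x)
      ((q₁ : ℝ) + (q₂ : ℝ) * deriv f x) x := by
    intro x
    have h1 : HasDerivAt (fun x : ℝ => (q₁ : ℝ) * x) (q₁ : ℝ) x := by
      simpa using (hasDerivAt_id x).const_mul (q₁ : ℝ)
    exact h1.add (((hfd x).hasDerivAt).const_mul (q₂ : ℝ))
  have hF' : ∀ x, HasDerivAt (fun x => (q₁ : ℝ) + (q₂ : ℝ) * deriv f x)
      ((q₂ : ℝ) * deriv (deriv f) x) x := fun x =>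
    (((hf'd x).hasDerivAt).const_mul (q₂ : ℝ)).const_add (q₁ : ℝ)
  have hδp : δ ≤ |(q₁ : ℝ) * x₀ + (q₂ : ℝ) * f x₀ - (p₀ : ℝ)| := round_le _ p₀
  have hkey := key (c₁ * |(q₂:ℝ)|) (c₂ * |(q₂:ℝ)|) (by positivity) (by positivity)
    (fun x => (q₁ : ℝ) * x + (q₂ : ℝ) * f x)
    (fun x => (q₁ : ℝ) + (q₂ : ℝ) * deriv f x)
    (fun x => (q₂ : ℝ) * deriv (deriv f) x)
    hF hF'
    (fun x => by rw [abs_mul]; nlinarith [(hbound x).1, abs_nonneg ((q₂:ℝ)), hc₁])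
    (fun x => by rw [abs_mul]; nlinarith [(hbound x).2, abs_nonneg ((q₂:ℝ)), (hbound x).1,
      hc₁.le.trans (hbound x).1])
    x₀ hx₀ (p₀ : ℝ) δ ψq hψqpos hδp hδ a b
  refine le_trans hkey (ENNReal.ofReal_le_ofReal (le_of_eq ?_))
  -- real arithmetic with square roots
  have e1 : Real.sqrt (|(q₂:ℝ)| * δ) = Real.sqrt |(q₂:ℝ)| * Real.sqrt δ :=
    Real.sqrt_mul (abs_nonneg _) _
  have e2 : Real.sqrt (δ / (2 * (c₂ * |(q₂:ℝ)|))) =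
      Real.sqrt δ / (Real.sqrt (2 * c₂) * Real.sqrt |(q₂:ℝ)|) := by
    rw [Real.sqrt_div hδpos.le, show 2 * (c₂ * |(q₂:ℝ)|) = (2 * c₂) * |(q₂:ℝ)| by ring,
      Real.sqrt_mul (by positivity)]
  have e3 : Real.sqrt |(q₂:ℝ)| * Real.sqrt |(q₂:ℝ)| = |(q₂:ℝ)| :=
    Real.mul_self_sqrt (abs_nonneg _)
  have p1 : (0:ℝ) < Real.sqrt δ := Real.sqrt_pos.mpr hδpos
  have p2 : (0:ℝ) < Real.sqrt (2 * c₂) := Real.sqrt_pos.mpr (by positivity)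
  have p3 : (0:ℝ) < Real.sqrt |(q₂:ℝ)| := Real.sqrt_pos.mpr hq2pos
  rw [e1, e2]
  field_simp
  linear_combination e3
end

section
/- Let f: ℝ → ℝ be a C² function with 0 < c₁ ≤ |f''(x)| ≤ c₂ < ∞ for all x ∈ ℝ and with f'' of constant sign, let I ⊆ ℝ be a compact interval, and let ψ: ℕ → (0,∞). There is a constant K > 0 depending only on c₁ and c₂ with the following property: for integers q₁, q₂ with q₂ ≠ 0, set q := max(|q₁|,|q₂|), F(x) := q₁x + q₂f(x), let x₀ be the unique point with F'(x₀) = 0, and let p₀ be the unique integer with −1/2 < F(x₀) − p₀ ≤ 1/2. If ‖F(x₀)‖ < 2ψ(q), then the Lebesgue measure of μ(q₁,q₂,p₀) satisfies |μ(q₁,q₂,p₀)| ≤ K·√(ψ(q)/|q₂|). -/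
open MeasureTheory Set

/-- Key Taylor estimate: if `deriv F x₀ = 0` and `|F''| ≥ c` everywhere, then for `x₀ < x`,
`|F x - F x₀| ≥ c/2 * (x - x₀)^2`. -/
lemma key_taylor (F : ℝ → ℝ) (hF : ContDiff ℝ 2 F) {c x₀ x : ℝ} (hx : x₀ < x)
    (hd : deriv F x₀ = 0) (hc : ∀ t, c ≤ |deriv (deriv F) t|) :
    c / 2 * (x - x₀) ^ 2 ≤ |F x - F x₀| := by
  have hF' : Differentiable ℝ F ∧ ContDiff ℝ 1 (deriv F) := by
    have := contDiff_succ_iff_deriv.mp (show ContDiff ℝ (1 + 1) F from hF)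
    exact ⟨this.1, this.2.2⟩
  have hF1 : Differentiable ℝ F := hF'.1
  have hF2 : Differentiable ℝ (deriv F) := hF'.2.differentiable one_ne_zero
  have hs : UniqueDiffOn ℝ (Icc x₀ x) := uniqueDiffOn_Icc hx
  have heq : EqOn (iteratedDerivWithin 1 F (Icc x₀ x)) (deriv F) (Icc x₀ x) := by
    intro t ht
    rw [iteratedDerivWithin_one, (hF1 t).derivWithin (hs t ht)]
  have hdiff : DifferentiableOn ℝ (iteratedDerivWithin 1 F (Icc x₀ x)) (Ioo x₀ x) := by
    exact hF2.differentiableOn.congr fun t ht => heq (Ioo_subset_Icc_self ht)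
  obtain ⟨x', hx', hT⟩ := taylor_mean_remainder_lagrange (n := 1) hx.ne
    (by rw [uIcc_of_le hx.le]; exact hF.contDiffOn.of_le (by norm_num))
    (by rw [uIcc_of_le hx.le, uIoo_of_le hx.le]; exact hdiff)
  rw [uIcc_of_le hx.le] at hT
  rw [uIoo_of_le hx.le] at hx'
  have h2 : iteratedDerivWithin 2 F (Icc x₀ x) x' = deriv (deriv F) x' := by
    have hx'I : x' ∈ Icc x₀ x := Ioo_subset_Icc_self hx'
    rw [show (2:ℕ) = 1 + 1 from rfl, iteratedDerivWithin_succ,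
      derivWithin_congr heq (heq hx'I), (hF2 x').derivWithin (hs x' hx'I)]
  have hTay : taylorWithinEval F 1 (Icc x₀ x) x₀ x = F x₀ := by
    rw [show (1:ℕ) = 0 + 1 from rfl, taylorWithinEval_succ, taylor_within_zero_eval]
    have : iteratedDerivWithin 1 F (Icc x₀ x) x₀ = deriv F x₀ :=
      heq (left_mem_Icc.mpr hx.le)
    simp [this, hd]
  rw [hTay, h2] at hT
  rw [hT, abs_div, abs_mul]
  have hfac : |((((1:ℕ)+1).factorial : ℕ) : ℝ)| = 2 := by norm_num [Nat.factorial]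
  rw [hfac]
  have h1 : c / 2 * (x - x₀) ^ 2 = c * (x - x₀) ^ 2 / 2 := by ring
  rw [h1]
  gcongr ?_ / 2
  calc c * (x - x₀)^2 ≤ |deriv (deriv F) x'| * (x - x₀)^2 := by
        have := hc x'; nlinarith [sq_nonneg (x - x₀)]
    _ = |deriv (deriv F) x'| * |(x - x₀) ^ (1+1)| := by
        rw [abs_pow, sq_abs]

/-- Two-sided version of `key_taylor`. -/
lemma key_taylor' (F : ℝ → ℝ) (hF : ContDiff ℝ 2 F) {c x₀ : ℝ} (x : ℝ)
    (hd : deriv F x₀ = 0) (hc : ∀ t, c ≤ |deriv (deriv F) t|) :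
    c / 2 * (x - x₀) ^ 2 ≤ |F x - F x₀| := by
  rcases lt_trichotomy x₀ x with h | h | h
  · exact key_taylor F hF h hd hc
  · simp [h]
  · -- reflect
    have hF1 : Differentiable ℝ F := hF.differentiable (by norm_num)
    have hF2 : Differentiable ℝ (deriv F) := by
      have := contDiff_succ_iff_deriv.mp (show ContDiff ℝ (1 + 1) F from hF)
      exact this.2.2.differentiable one_ne_zero
    set G : ℝ → ℝ := fun t => F (2 * x₀ - t) with hG
    have hGC : ContDiff ℝ 2 G := hF.comp (contDiff_const.sub contDiff_id)
    have hneg : ∀ t : ℝ, HasDerivAt (fun s : ℝ => 2 * x₀ - s) (-1) t := fun t => by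
      simpa using (hasDerivAt_id t).const_sub (2 * x₀)
    have hdG : deriv G = fun t => -deriv F (2 * x₀ - t) := by
      funext t
      have : HasDerivAt G (deriv F (2 * x₀ - t) * (-1)) t :=
        ((hF1 (2 * x₀ - t)).hasDerivAt).comp t (hneg t)
      simpa using this.deriv
    have hd2G : ∀ t, deriv (deriv G) t = deriv (deriv F) (2 * x₀ - t) := by
      intro t
      rw [hdG]
      have : HasDerivAt (fun s => -deriv F (2 * x₀ - s))
          (-(deriv (deriv F) (2 * x₀ - t) * (-1))) t :=
        (((hF2 (2 * x₀ - t)).hasDerivAt).comp t (hneg t)).neg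
      simpa using this.deriv
    have hdG0 : deriv G x₀ = 0 := by
      rw [hdG]; simp [show 2 * x₀ - x₀ = x₀ by ring, hd]
    have hcG : ∀ t, c ≤ |deriv (deriv G) t| := fun t => by rw [hd2G]; exact hc _
    have := key_taylor G hGC (show x₀ < 2 * x₀ - x by linarith) hdG0 hcG
    have e1 : G (2 * x₀ - x) = F x := by show F _ = F x; congr 1; ring
    have e2 : G x₀ = F x₀ := by show F _ = F x₀; congr 1; ring
    have e3 : (2 * x₀ - x - x₀) ^ 2 = (x - x₀) ^ 2 := by ring
    rwa [e1, e2, e3] at this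

theorem stmt16 (c₁ c₂ : ℝ) (hc₁ : 0 < c₁) (hc : c₁ ≤ c₂) :
    ∃ K > (0 : ℝ), ∀ f : ℝ → ℝ, ContDiff ℝ 2 f →
      (∀ x, c₁ ≤ |deriv (deriv f) x| ∧ |deriv (deriv f) x| ≤ c₂) →
      ((∀ x, 0 < deriv (deriv f) x) ∨ (∀ x, deriv (deriv f) x < 0)) →
      ∀ a b : ℝ, a ≤ b →
      ∀ ψ : ℕ → ℝ, (∀ q, 0 < ψ q) →
      ∀ q₁ q₂ : ℤ, q₂ ≠ 0 →
      ∀ x₀ : ℝ, (q₁ : ℝ) + (q₂ : ℝ) * deriv f x₀ = 0 →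
      ∀ p₀ : ℤ, -(1/2) < ((q₁ : ℝ) * x₀ + (q₂ : ℝ) * f x₀) - (p₀ : ℝ) →
        ((q₁ : ℝ) * x₀ + (q₂ : ℝ) * f x₀) - (p₀ : ℝ) ≤ 1/2 →
      distNearestInt ((q₁ : ℝ) * x₀ + (q₂ : ℝ) * f x₀) <
          2 * ψ (max q₁.natAbs q₂.natAbs) →
      volume {x ∈ Icc a b | |(q₁ : ℝ) * x + (q₂ : ℝ) * f x - (p₀ : ℝ)| <
          ψ (max q₁.natAbs q₂.natAbs)}
        ≤ ENNReal.ofReal (K * Real.sqrt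
            (ψ (max q₁.natAbs q₂.natAbs) / |(q₂ : ℝ)|)) := by
  refine ⟨2 * Real.sqrt (6 / c₁), by positivity, ?_⟩
  intro f hf hbound _hsign a b hab ψ hψ q₁ q₂ hq₂ x₀ hx₀ p₀ hp₁ hp₂ hdist
  set ψq := ψ (max q₁.natAbs q₂.natAbs) with hψqdef
  have hψq : 0 < ψq := hψ _
  have hq₂' : ((q₂ : ℝ)) ≠ 0 := Int.cast_ne_zero.mpr hq₂
  have hq₂abs : (0:ℝ) < |(q₂:ℝ)| := abs_pos.mpr hq₂'
  set F : ℝ → ℝ := fun x => (q₁ : ℝ) * x + (q₂ : ℝ) * f x with hFdef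
  have hfd : Differentiable ℝ f := hf.differentiable (by norm_num)
  have hfd2 : Differentiable ℝ (deriv f) := by
    have := contDiff_succ_iff_deriv.mp (show ContDiff ℝ (1 + 1) f from hf)
    exact this.2.2.differentiable one_ne_zero
  have hFC : ContDiff ℝ 2 F :=
    (contDiff_const.mul contDiff_id).add (contDiff_const.mul hf)
  have hderivF : ∀ x, deriv F x = (q₁ : ℝ) + (q₂ : ℝ) * deriv f x := by
    intro x
    have : HasDerivAt F ((q₁ : ℝ) * 1 + (q₂ : ℝ) * deriv f x) x :=
      ((hasDerivAt_id x).const_mul (q₁ : ℝ)).add ((hfd x).hasDerivAt.const_mul (q₂ : ℝ))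
    simpa using this.deriv
  have hderivF0 : deriv F x₀ = 0 := by rw [hderivF]; exact hx₀
  have hderiv2F : ∀ x, deriv (deriv F) x = (q₂ : ℝ) * deriv (deriv f) x := by
    intro x
    have he : deriv F = fun x => (q₁ : ℝ) + (q₂ : ℝ) * deriv f x := funext hderivF
    rw [he]
    have : HasDerivAt (fun x => (q₁ : ℝ) + (q₂ : ℝ) * deriv f x)
        ((q₂ : ℝ) * deriv (deriv f) x) x :=
      ((hfd2 x).hasDerivAt.const_mul (q₂ : ℝ)).const_add (q₁ : ℝ)
    exact this.deriv
  have hcF : ∀ t, c₁ * |(q₂:ℝ)| ≤ |deriv (deriv F) t| := by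
    intro t
    rw [hderiv2F t, abs_mul]
    have h1 := (hbound t).1
    calc c₁ * |(q₂:ℝ)| = |(q₂:ℝ)| * c₁ := by ring
      _ ≤ |(q₂:ℝ)| * |deriv (deriv f) t| := by
          exact mul_le_mul_of_nonneg_left h1 (abs_nonneg _)
  have hkey : ∀ x, c₁ * |(q₂:ℝ)| / 2 * (x - x₀) ^ 2 ≤ |F x - F x₀| :=
    fun x => key_taylor' F hFC x hderivF0 hcF
  -- |F x₀ - p₀| < 2 ψq
  set y : ℝ := (q₁ : ℝ) * x₀ + (q₂ : ℝ) * f x₀ with hy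
  have habs0 : |y - (p₀ : ℝ)| < 2 * ψq := by
    have hround : |y - (round y : ℝ)| < 2 * ψq := hdist
    by_cases hpr : p₀ = round y
    · rwa [hpr]
    · have hint : (1:ℝ) ≤ |(p₀:ℝ) - (round y : ℝ)| := by
        have h : (1:ℤ) ≤ |p₀ - round y| := Int.one_le_abs (sub_ne_zero.mpr hpr)
        exact_mod_cast h
      have habs2 : |y - (round y : ℝ)| ≤ 1/2 := abs_sub_round y
      have hy1 : |y - (p₀:ℝ)| ≤ 1/2 := abs_le.mpr ⟨by linarith, hp₂⟩
      have tri : |(p₀:ℝ) - (round y : ℝ)| ≤ |(p₀:ℝ) - y| + |y - (round y : ℝ)| :=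
        abs_sub_le _ _ _
      have hcomm : |(p₀:ℝ) - y| = |y - (p₀:ℝ)| := abs_sub_comm _ _
      linarith
  set r : ℝ := Real.sqrt (6 * ψq / (c₁ * |(q₂:ℝ)|)) with hr
  have hsub : {x ∈ Icc a b | |(q₁ : ℝ) * x + (q₂ : ℝ) * f x - (p₀ : ℝ)| < ψq}
      ⊆ Ioo (x₀ - r) (x₀ + r) := by
    intro x hxS
    obtain ⟨-, hlt⟩ := hxS
    have hFF : |F x - F x₀| ≤ |F x - (p₀:ℝ)| + |y - (p₀:ℝ)| := by
      have : F x - F x₀ = (F x - (p₀:ℝ)) - (y - (p₀:ℝ)) := by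
        simp only [hFdef, hy]; ring
      rw [this]
      exact abs_sub _ _
    have h3 : |F x - F x₀| < 3 * ψq := by
      have : |F x - (p₀:ℝ)| < ψq := hlt
      linarith
    have hsq : (x - x₀)^2 < 6 * ψq / (c₁ * |(q₂:ℝ)|) := by
      have hk := hkey x
      have hpos : 0 < c₁ * |(q₂:ℝ)| := by positivity
      rw [lt_div_iff₀ hpos]
      nlinarith
    have hxr : |x - x₀| < r := by
      rw [← Real.sqrt_sq_eq_abs, hr]
      exact Real.sqrt_lt_sqrt (sq_nonneg _) hsq
    rw [abs_lt] at hxr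
    constructor <;> linarith [hxr.1, hxr.2]
  calc volume {x ∈ Icc a b | |(q₁ : ℝ) * x + (q₂ : ℝ) * f x - (p₀ : ℝ)| < ψq}
      ≤ volume (Ioo (x₀ - r) (x₀ + r)) := measure_mono hsub
    _ = ENNReal.ofReal (2 * r) := by rw [Real.volume_Ioo]; congr 1; ring
    _ ≤ ENNReal.ofReal (2 * Real.sqrt (6 / c₁) * Real.sqrt (ψq / |(q₂:ℝ)|)) := by
        apply ENNReal.ofReal_le_ofReal
        have : r = Real.sqrt (6 / c₁) * Real.sqrt (ψq / |(q₂:ℝ)|) := by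
          rw [hr, ← Real.sqrt_mul (by positivity : (0:ℝ) ≤ 6 / c₁)]
          congr 1
          field_simp
        rw [this]; exact le_of_eq (by ring)
end
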